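/- Let Y be a real random variable and (A,B) a random vector in ℝ² such that Y satisfies the distributional equation Y =_d AY + B. Suppose the law of (A,B) assigns strictly positive probability to each of the two sets {(x,y) ∈ ℝ² : x > 1, y > 0} and {(x,y) ∈ ℝ² : 0 < x < 1, y > 0}. Then the support of the law of Y is unbounded from above; in particular, P(Y > u) > 0 for every real u. -/

import Mathlib

open MeasureTheory ProbabilityTheory Filter Topology

/-- The topological support of a measure: the set of points all of whose open
neighborhoods have positive measure (equivalently, the smallest closed set of full
measure, for a Borel measure on ℝ). -/
def measureSupport {X : Type*} [TopologicalSpace X] [MeasurableSpace X]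
    (μ : Measure X) : Set X := {x | ∀ U ∈ nhds x, 0 < μ U}

lemma exists_mem_measureSupport {X : Type*} [TopologicalSpace X] [MeasurableSpace X]
    [SecondCountableTopology X] (μ : Measure X) {s : Set X} (hs : μ s ≠ 0) :
    ∃ x ∈ s, x ∈ measureSupport μ := by
  obtain ⟨x, hx, h⟩ := MeasureTheory.exists_mem_forall_mem_nhdsWithin_pos_measure hs
  exact ⟨x, hx, fun U hU => h U (nhdsWithin_le_nhds hU)⟩

lemma measureSupport_step
    {Ω : Type*} [MeasurableSpace Ω] (P : Measure Ω)
    (Y A B : Ω → ℝ) (hY : Measurable Y) (hA : Measurable A) (hB : Measurable B)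
    (hIndep : IndepFun Y (fun ω => (A ω, B ω)) P)
    (hDist : P.map (fun ω => A ω * Y ω + B ω) = P.map Y)
    {s a b : ℝ} (hs : s ∈ measureSupport (P.map Y))
    (hab : (a, b) ∈ measureSupport (P.map (fun ω => (A ω, B ω)))) :
    a * s + b ∈ measureSupport (P.map Y) := by
  intro U hU
  obtain ⟨U₀, hU₀sub, hU₀open, hmemU₀⟩ := mem_nhds_iff.mp hU
  have hABm : Measurable fun ω => (A ω, B ω) := hA.prodMk hB
  have hcont : Continuous fun q : (ℝ × ℝ) × ℝ => q.1.1 * q.2 + q.1.2 := by fun_prop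
  have hpre : (fun q : (ℝ × ℝ) × ℝ => q.1.1 * q.2 + q.1.2) ⁻¹' U₀ ∈ 𝓝 (((a, b), s) : (ℝ × ℝ) × ℝ) :=
    (hcont.continuousAt (x := ((a, b), s))).preimage_mem_nhds (hU₀open.mem_nhds hmemU₀)
  obtain ⟨V, W, hVopen, hVmem, hWopen, hWmem, hsub⟩ := mem_nhds_prod_iff'.mp hpre
  have hV : 0 < P ((fun ω => (A ω, B ω)) ⁻¹' V) := by
    have := hab V (hVopen.mem_nhds hVmem)
    rwa [Measure.map_apply hABm hVopen.measurableSet] at this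
  have hW : 0 < P (Y ⁻¹' W) := by
    have := hs W (hWopen.mem_nhds hWmem)
    rwa [Measure.map_apply hY hWopen.measurableSet] at this
  have hind := hIndep.measure_inter_preimage_eq_mul W V hWopen.measurableSet
    hVopen.measurableSet
  have hpos : 0 < P (Y ⁻¹' W ∩ (fun ω => (A ω, B ω)) ⁻¹' V) := by
    rw [hind]; exact ENNReal.mul_pos hW.ne' hV.ne'
  have hsub2 : Y ⁻¹' W ∩ (fun ω => (A ω, B ω)) ⁻¹' V ⊆
      (fun ω => A ω * Y ω + B ω) ⁻¹' U₀ := by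
    rintro ω ⟨h1, h2⟩
    exact hsub (Set.mk_mem_prod h2 h1)
  have h0 : 0 < P.map Y U₀ := by
    rw [← hDist, Measure.map_apply (f := fun ω => A ω * Y ω + B ω) ((hA.mul hY).add hB) hU₀open.measurableSet]
    exact lt_of_lt_of_le hpos (measure_mono hsub2)
  exact lt_of_lt_of_le h0 (measure_mono hU₀sub)

/-- If `Y =_d A Y + B` and the law of `(A, B)` charges both sets
`{x > 1, y > 0}` and `{0 < x < 1, y > 0}`, then the support of the law of `Y`
is unbounded from above; in particular `P(Y > u) > 0` for every real `u`. -/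
theorem support_unbounded_above_of_charges
    {Ω : Type*} [MeasurableSpace Ω] (P : Measure Ω) [IsProbabilityMeasure P]
    (Y A B : Ω → ℝ) (hY : Measurable Y) (hA : Measurable A) (hB : Measurable B)
    (hIndep : IndepFun Y (fun ω => (A ω, B ω)) P)
    (hDist : P.map (fun ω => A ω * Y ω + B ω) = P.map Y)
    (hpos₁ : 0 < P.map (fun ω => (A ω, B ω)) {p : ℝ × ℝ | 1 < p.1 ∧ 0 < p.2})
    (hpos₂ : 0 < P.map (fun ω => (A ω, B ω)) {p : ℝ × ℝ | 0 < p.1 ∧ p.1 < 1 ∧ 0 < p.2}) :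
    ¬ BddAbove (measureSupport (P.map Y)) ∧ ∀ u : ℝ, 0 < P {ω | u < Y ω} := by
  have hstep : ∀ {s a b : ℝ}, s ∈ measureSupport (P.map Y) →
      (a, b) ∈ measureSupport (P.map (fun ω => (A ω, B ω))) →
      a * s + b ∈ measureSupport (P.map Y) :=
    fun hs hab => measureSupport_step P Y A B hY hA hB hIndep hDist hs hab
  -- pick (a, b) with 1 < a, 0 < b in the support of the law of (A,B)
  obtain ⟨⟨a, b⟩, ⟨ha1, hb0⟩, habsupp⟩ := exists_mem_measureSupport _ hpos₁.ne'
  -- pick (a', b') with 0 < a' < 1, 0 < b' in the support of the law of (A,B)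
  obtain ⟨⟨a', b'⟩, ⟨ha'0, ha'1, hb'0⟩, hab'supp⟩ := exists_mem_measureSupport _ hpos₂.ne'
  -- the support of the law of Y is nonempty
  have hP : IsProbabilityMeasure (P.map Y) := Measure.isProbabilityMeasure_map hY.aemeasurable
  have huniv : (P.map Y) Set.univ ≠ 0 := by simp [hP.measure_univ]
  obtain ⟨s₀, -, hs₀⟩ := exists_mem_measureSupport (P.map Y) huniv
  -- iterating the contraction x ↦ a' x + b' gives a positive support point
  set g : ℝ → ℝ := fun x => a' * x + b' with hg
  set c : ℝ := b' / (1 - a') with hc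
  have hc0 : 0 < c := div_pos hb'0 (by linarith)
  have h1a : (1:ℝ) - a' ≠ 0 := by linarith
  have hcb : c * (1 - a') = b' := div_mul_cancel₀ _ h1a
  have hcfix : a' * c + b' = c := by linear_combination -hcb
  have hgiter : ∀ n, g^[n] s₀ - c = a' ^ n * (s₀ - c) := by
    intro n
    induction n with
    | zero => simp
    | succ n ih =>
      rw [Function.iterate_succ_apply', pow_succ]
      have : g (g^[n] s₀) - c = a' * (g^[n] s₀ - c) := by
        simp only [hg]; linarith [hcfix]
      rw [this, ih]; ring
  have hgsupp : ∀ n, g^[n] s₀ ∈ measureSupport (P.map Y) := by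
    intro n
    induction n with
    | zero => simpa using hs₀
    | succ n ih =>
      rw [Function.iterate_succ_apply']
      exact hstep ih hab'supp
  have htend : Tendsto (fun n => a' ^ n * |s₀ - c|) atTop (nhds 0) := by
    have := tendsto_pow_atTop_nhds_zero_of_lt_one ha'0.le ha'1
    simpa using this.mul_const |s₀ - c|
  obtain ⟨n, hn⟩ := (htend.eventually (gt_mem_nhds hc0)).exists
  have hs₁pos : 0 < g^[n] s₀ := by
    have h1 : |g^[n] s₀ - c| < c := by
      rw [hgiter n, abs_mul, abs_of_nonneg (pow_nonneg ha'0.le n)]; exact hn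
    have := abs_lt.mp h1
    linarith
  set s₁ : ℝ := g^[n] s₀ with hs₁
  have hs₁supp : s₁ ∈ measureSupport (P.map Y) := hgsupp n
  -- iterating the expansion x ↦ a x + b goes to +∞ from s₁
  set f : ℝ → ℝ := fun x => a * x + b with hf
  have hfgrow : ∀ m, s₁ + m * b ≤ f^[m] s₁ := by
    intro m
    induction m with
    | zero => simp
    | succ m ih =>
      rw [Function.iterate_succ_apply']
      have hpos : 0 < f^[m] s₁ := by
        have : (0:ℝ) ≤ m * b := mul_nonneg (Nat.cast_nonneg m) hb0.le
        nlinarith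
      have : f^[m] s₁ ≤ a * f^[m] s₁ := le_mul_of_one_le_left hpos.le ha1.le
      push_cast
      simp only [hf]
      nlinarith
  have hfsupp : ∀ m, f^[m] s₁ ∈ measureSupport (P.map Y) := by
    intro m
    induction m with
    | zero => simpa using hs₁supp
    | succ m ih =>
      rw [Function.iterate_succ_apply']
      exact hstep ih habsupp
  -- key: support contains points above any u
  have hkey : ∀ u : ℝ, ∃ t ∈ measureSupport (P.map Y), u < t := by
    intro u
    obtain ⟨m, hm⟩ := exists_nat_gt ((u - s₁) / b)
    refine ⟨f^[m] s₁, hfsupp m, ?_⟩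
    have : u - s₁ < m * b := by
      rw [div_lt_iff₀ hb0] at hm
      linarith
    have := hfgrow m
    linarith
  constructor
  · rintro ⟨M, hM⟩
    obtain ⟨t, ht, htM⟩ := hkey M
    exact absurd (hM ht) (not_le.mpr htM)
  · intro u
    obtain ⟨t, ht, htu⟩ := hkey u
    have : 0 < P.map Y (Set.Ioi u) := ht _ (isOpen_Ioi.mem_nhds htu)
    rwa [Measure.map_apply hY measurableSet_Ioi] at this
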